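/- Let A ∈ ℝ^{2N×2N} be symmetric and S_T defined as the 4N×4N block matrix [[−(T/2π)A, −J_N],[J_N, −(T/2π)A]]. Then det S_T = 0 if and only if (2π/T)·i is an eigenvalue of J_N·A. -/

import Mathlib

open Matrix

/-- The standard symplectic matrix `J_N = [[0, -I_N],[I_N, 0]]`. -/
def symplJ (N : ℕ) : Matrix (Fin N ⊕ Fin N) (Fin N ⊕ Fin N) ℝ :=
  Matrix.fromBlocks 0 (-1) 1 0

/-- The matrix `S_T = [[-(T/2π)A, -J_N],[J_N, -(T/2π)A]]`. -/
noncomputable def matS (N : ℕ) (A : Matrix (Fin N ⊕ Fin N) (Fin N ⊕ Fin N) ℝ) (T : ℝ) :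
    Matrix ((Fin N ⊕ Fin N) ⊕ (Fin N ⊕ Fin N)) ((Fin N ⊕ Fin N) ⊕ (Fin N ⊕ Fin N)) ℝ :=
  Matrix.fromBlocks (-(T / (2 * Real.pi)) • A) (-(symplJ N)) (symplJ N)
    (-(T / (2 * Real.pi)) • A)

lemma aux_mem_spectrum_iff_det {n : Type*} [Fintype n] [DecidableEq n]
    (M : Matrix n n ℂ) (μ : ℂ) :
    μ ∈ spectrum ℂ M ↔ (μ • (1 : Matrix n n ℂ) - M).det = 0 := by
  rw [spectrum.mem_iff, Matrix.isUnit_iff_isUnit_det, isUnit_iff_ne_zero, not_ne_iff,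
    Algebra.algebraMap_eq_smul_one]

lemma aux_det_fromBlocks_skew {n : Type*} [Fintype n] [DecidableEq n]
    (X Y : Matrix n n ℂ) :
    (fromBlocks X (-Y) Y X).det = (X + Complex.I • Y).det * (X - Complex.I • Y).det := by
  have key : fromBlocks 1 (Complex.I • (1 : Matrix n n ℂ)) 0 1 * fromBlocks X (-Y) Y X *
      fromBlocks 1 (-(Complex.I • (1 : Matrix n n ℂ))) 0 1 =
      fromBlocks (X + Complex.I • Y) 0 Y (X - Complex.I • Y) := by
    simp [fromBlocks_multiply, Matrix.smul_mul, Matrix.mul_smul, smul_smul, Complex.I_mul_I]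
    constructor <;> abel
  have h1 : (fromBlocks (1 : Matrix n n ℂ) (Complex.I • (1 : Matrix n n ℂ)) 0 1).det = 1 := by
    rw [det_fromBlocks_zero₂₁]; simp
  have h2 : (fromBlocks (1 : Matrix n n ℂ) (-(Complex.I • (1 : Matrix n n ℂ))) 0 1).det = 1 := by
    rw [det_fromBlocks_zero₂₁]; simp
  have := congrArg Matrix.det key
  rw [det_mul, det_mul, h1, h2, one_mul, mul_one, det_fromBlocks_zero₁₂] at this
  exact this

theorem det_matS_eq_zero_iff (N : ℕ) (A : Matrix (Fin N ⊕ Fin N) (Fin N ⊕ Fin N) ℝ)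
    (hA : A.IsSymm) (T : ℝ) (hT : 0 < T) :
    (matS N A T).det = 0 ↔
      ((2 * Real.pi / T : ℝ) : ℂ) * Complex.I ∈
        spectrum ℂ ((symplJ N).map Complex.ofReal * A.map Complex.ofReal) := by
  set Jc : Matrix (Fin N ⊕ Fin N) (Fin N ⊕ Fin N) ℂ := (symplJ N).map Complex.ofReal with hJc
  set Ac : Matrix (Fin N ⊕ Fin N) (Fin N ⊕ Fin N) ℂ := A.map Complex.ofReal with hAc
  set c : ℝ := -(T / (2 * Real.pi)) with hc
  set μ : ℂ := ((2 * Real.pi / T : ℝ) : ℂ) * Complex.I with hμ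
  have hπ : (Real.pi : ℝ) ≠ 0 := Real.pi_ne_zero
  have hT0 : T ≠ 0 := ne_of_gt hT
  have hcne : (c : ℂ) ≠ 0 := by
    simp only [hc, Complex.ofReal_ne_zero]
    intro h
    apply hT0
    field_simp at h
    simpa using h
  have hmapmul : ∀ (M P : Matrix (Fin N ⊕ Fin N) (Fin N ⊕ Fin N) ℝ),
      (M * P).map Complex.ofReal = M.map Complex.ofReal * P.map Complex.ofReal :=
    fun M P => Matrix.map_mul (f := Complex.ofRealHom)
  -- basic facts about Jc
  have hJJ : Jc * Jc = -1 := by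
    have h0 : symplJ N * symplJ N = -1 := by
      ext (i | i) (j | j) <;>
        simp [symplJ, fromBlocks_multiply, Matrix.one_apply, eq_comm]
    rw [hJc, ← hmapmul, h0]
    ext i j
    simp [Matrix.map_apply, Matrix.one_apply, apply_ite]
  have hJdet : Jc.det ≠ 0 := by
    have h2 : Jc.det * Jc.det = (-1 : Matrix (Fin N ⊕ Fin N) (Fin N ⊕ Fin N) ℂ).det := by
      rw [← det_mul, hJJ]
    intro h
    rw [h, mul_zero] at h2
    have : (-1 : Matrix (Fin N ⊕ Fin N) (Fin N ⊕ Fin N) ℂ).det ≠ 0 := by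
      rw [show (-1 : Matrix (Fin N ⊕ Fin N) (Fin N ⊕ Fin N) ℂ) = -(1 : Matrix _ _ ℂ) from rfl,
        Matrix.det_neg, Matrix.det_one, mul_one]
      exact pow_ne_zero _ (neg_ne_zero.mpr one_ne_zero)
    exact this h2.symm
  have hJt : Jcᵀ = -Jc := by
    have h0 : (symplJ N)ᵀ = -(symplJ N) := by
      ext (i | i) (j | j) <;> simp [symplJ, Matrix.transpose_apply, Matrix.one_apply, eq_comm]
    rw [hJc, ← Matrix.transpose_map, h0]
    ext i j; simp [Matrix.map_apply]
  have hAt : Acᵀ = Ac := by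
    rw [hAc, ← Matrix.transpose_map, hA.eq]
  -- complexify
  have ha : ((-(T / (2 * Real.pi))) • A).map Complex.ofReal = (c : ℂ) • Ac := by
    ext i j; simp [Matrix.map_apply, hc, hAc]
  have hb : (-(symplJ N)).map Complex.ofReal = -Jc := by
    ext i j; simp [Matrix.map_apply, hJc]
  have hmap : (matS N A T).map Complex.ofReal =
      fromBlocks ((c : ℂ) • Ac) (-Jc) Jc ((c : ℂ) • Ac) := by
    rw [matS, fromBlocks_map, ha, hb]
  have hdet0 : (matS N A T).det = 0 ↔ ((matS N A T).map Complex.ofReal).det = 0 := by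
    have : ((matS N A T).map Complex.ofReal).det = ((matS N A T).det : ℂ) :=
      (RingHom.map_det Complex.ofRealHom _).symm
    rw [this, Complex.ofReal_eq_zero]
  -- block determinant factorization
  rw [hdet0, hmap, aux_det_fromBlocks_skew]
  -- the two factors are equal (transpose)
  have htr : ((c : ℂ) • Ac + Complex.I • Jc).det = ((c : ℂ) • Ac - Complex.I • Jc).det := by
    rw [← Matrix.det_transpose ((c : ℂ) • Ac + Complex.I • Jc)]
    congr 1
    rw [transpose_add, transpose_smul, transpose_smul, hJt, hAt, smul_neg]
    abel
  rw [htr, mul_self_eq_zero]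
  -- relate to eigenvalue equation
  have hre : (-(T / (2 * Real.pi))) * (2 * Real.pi / T) = -1 := by
    field_simp
  have hcμ : (c : ℂ) * μ = -Complex.I := by
    rw [hμ, hc, ← mul_assoc, ← Complex.ofReal_mul, hre]
    simp
  have hkey : Jc * ((c : ℂ) • Ac - Complex.I • Jc) = (c : ℂ) • (Jc * Ac - μ • 1) := by
    rw [Matrix.mul_sub, Matrix.mul_smul, Matrix.mul_smul, hJJ, smul_sub, smul_smul, hcμ,
      smul_neg, neg_smul]
  have hmul : Jc.det * ((c : ℂ) • Ac - Complex.I • Jc).det =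
      (c : ℂ) ^ (Fintype.card (Fin N ⊕ Fin N)) * (Jc * Ac - μ • 1).det := by
    rw [← det_mul, hkey, det_smul]
  have hcpow : (c : ℂ) ^ (Fintype.card (Fin N ⊕ Fin N)) ≠ 0 := pow_ne_zero _ hcne
  have hiff : ((c : ℂ) • Ac - Complex.I • Jc).det = 0 ↔ (Jc * Ac - μ • 1).det = 0 := by
    constructor
    · intro h
      rw [h, mul_zero] at hmul
      rcases mul_eq_zero.mp hmul.symm with h' | h'
      · exact absurd h' hcpow
      · exact h'
    · intro h
      rw [h, mul_zero] at hmul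
      rcases mul_eq_zero.mp hmul with h' | h'
      · exact absurd h' hJdet
      · exact h'
  rw [hiff, aux_mem_spectrum_iff_det]
  rw [show μ • (1 : Matrix (Fin N ⊕ Fin N) (Fin N ⊕ Fin N) ℂ) - Jc * Ac
      = -(Jc * Ac - μ • 1) from (neg_sub _ _).symm, Matrix.det_neg, mul_eq_zero]
  constructor
  · intro h; right; exact h
  · intro h
    rcases h with h | h
    · exact absurd h (pow_ne_zero _ (neg_ne_zero.mpr one_ne_zero))
    · exact h
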